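/- arXiv:1602.01590 — 2 statements merged into one kernel-verified Lean document; each statement's English description precedes it below -/
import Mathlib

section
/- Let E be a finite-dimensional nilpotent evolution algebra with natural basis B partitioned as B = B₁ ∪ … ∪ B_r where Bᵢ = {e ∈ B : e² ∈ Ann^{i-1}(E), e ∉ Ann^{i-1}(E)}, and set Uᵢ = span(Bᵢ). Then for each i ≥ 2, Uᵢ ⊕ U₁ = {x ∈ Annⁱ(E) : x·Ann^{i-1}(E) = 0}; in particular this subspace does not depend on the chosen natural basis. -/
/-- The multiplication of a (not necessarily associative) `F`-algebra structure on `A`,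
given as a bilinear map. -/
abbrev Mul2 (F A : Type*) [Field F] [AddCommGroup A] [Module F A] :=
  A →ₗ[F] A →ₗ[F] A

variable {F A : Type*} [Field F] [AddCommGroup A] [Module F A]

/-- A submodule is an ideal if it absorbs multiplication on both sides. -/
def IsIdeal (m : Mul2 F A) (I : Submodule F A) : Prop :=
  ∀ x ∈ I, ∀ y : A, m x y ∈ I ∧ m y x ∈ I

/-- An algebra is decomposable if it is the direct sum of two nonzero ideals. -/
def Decomposable (m : Mul2 F A) : Prop :=
  ∃ I J : Submodule F A, IsIdeal m I ∧ IsIdeal m J ∧ I ≠ ⊥ ∧ J ≠ ⊥ ∧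
    I ⊓ J = ⊥ ∧ I ⊔ J = ⊤

/-- The set of `x` with `x A ⊆ N` and `A x ⊆ N`, as a submodule. -/
def annOver (m : Mul2 F A) (N : Submodule F A) : Submodule F A where
  carrier := {x | ∀ y : A, m x y ∈ N ∧ m y x ∈ N}
  add_mem' := by
    intro a b ha hb y
    constructor
    · simpa using N.add_mem (ha y).1 (hb y).1
    · simpa using N.add_mem (ha y).2 (hb y).2
  zero_mem' := by intro y; simp
  smul_mem' := by
    intro c a ha y
    constructor
    · simpa using N.smul_mem c (ha y).1
    · simpa using N.smul_mem c (ha y).2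

/-- The annihilator `{x | xA = Ax = 0}`. -/
def annA (m : Mul2 F A) : Submodule F A := annOver m ⊥

/-- The upper annihilating series: `Ann⁰ = 0`, `Annⁱ/Annⁱ⁻¹ = Ann(A/Annⁱ⁻¹)`. -/
def annSeries (m : Mul2 F A) : ℕ → Submodule F A
  | 0 => ⊥
  | (k+1) => annOver m (annSeries m k)

/-- The span of all products of elements of `I` with elements of `J`. -/
def mulSub (m : Mul2 F A) (I J : Submodule F A) : Submodule F A :=
  Submodule.span F {z | ∃ x ∈ I, ∃ y ∈ J, z = m x y}

/-- `A²`, the span of all products. -/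
def sqA (m : Mul2 F A) : Submodule F A := mulSub m ⊤ ⊤

/-- Right powers: `rpow 0 = A = A^{<1>}`, `rpow (k+1) = (rpow k) · A`. -/
def rpow (m : Mul2 F A) : ℕ → Submodule F A
  | 0 => ⊤
  | (k+1) => mulSub m (rpow m k) ⊤

/-- Full powers: `apow 0 = A = A¹`, `apow (k+1) = Σ_{i+j=k} (apow i)(apow j)`,
i.e. `A^{k+2} = Σ_{i=1}^{k+1} Aⁱ A^{k+2-i}`. -/
def apow (m : Mul2 F A) : ℕ → Submodule F A
  | 0 => ⊤
  | (k+1) => ⨆ i : Fin (k+1), mulSub m (apow m i.1) (apow m (k - i.1))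
  decreasing_by
  · exact i.2
  · exact Nat.lt_succ_of_le (Nat.sub_le _ _)

/-- `A` is nilpotent: `Aⁿ = 0` for some `n`. -/
def IsNilpotentAlg (m : Mul2 F A) : Prop := ∃ n, apow m n = ⊥

/-- `A` is right nilpotent: `A^{<n>} = 0` for some `n`. -/
def IsRightNilpotentAlg (m : Mul2 F A) : Prop := ∃ n, rpow m n = ⊥

/-- A basis is natural if products of distinct basis vectors vanish. -/
def NaturalBasis (m : Mul2 F A) {ι : Type*} (bs : Module.Basis ι F A) : Prop :=
  ∀ i j, i ≠ j → m (bs i) (bs j) = 0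

/-- An evolution algebra: commutative with some finite natural basis. -/
def IsEvolutionAlg (m : Mul2 F A) : Prop :=
  (∀ x y, m x y = m y x) ∧
  ∃ (ι : Type) (_ : Fintype ι) (bs : Module.Basis ι F A), NaturalBasis m bs

/-- The set of `x` with `x N = 0`, as a submodule. -/
def annIn (m : Mul2 F A) (N : Submodule F A) : Submodule F A where
  carrier := {x | ∀ y ∈ N, m x y = 0}
  add_mem' := by
    intro a b ha hb y hy
    simp [ha y hy, hb y hy]
  zero_mem' := by intro y hy; simp
  smul_mem' := by
    intro c a ha y hy
    simp [ha y hy]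



section Aux

variable {F E : Type*} [Field F] [AddCommGroup E] [Module F E]
variable {ι : Type*} [Fintype ι]

lemma mul_basis_eq (m : Mul2 F E) (bs : Module.Basis ι F E) (hnat : NaturalBasis m bs)
    (x : E) (j : ι) : m x (bs j) = bs.repr x j • m (bs j) (bs j) := by
  conv_lhs => rw [← bs.sum_repr x]
  rw [map_sum, LinearMap.sum_apply]
  rw [Finset.sum_eq_single j]
  · simp
  · intro i _ hij
    simp [hnat i j hij]
  · simp

lemma annOver_eq (m : Mul2 F E) (hcomm : ∀ x y, m x y = m y x)
    (bs : Module.Basis ι F E) (hnat : NaturalBasis m bs) (N : Submodule F E) :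
    annOver m N = Submodule.span F (⇑bs '' {i | m (bs i) (bs i) ∈ N}) := by
  apply le_antisymm
  · intro x hx
    rw [Module.Basis.mem_span_image]
    intro j hj
    rw [Finset.mem_coe, Finsupp.mem_support_iff] at hj
    have h1 : m x (bs j) ∈ N := (hx (bs j)).1
    rw [mul_basis_eq m bs hnat] at h1
    have := N.smul_mem (bs.repr x j)⁻¹ h1
    rwa [smul_smul, inv_mul_cancel₀ hj, one_smul] at this
  · rw [Submodule.span_le]
    rintro _ ⟨i, hi, rfl⟩
    intro y
    have : m (bs i) y ∈ N := by
      rw [hcomm (bs i) y, mul_basis_eq m bs hnat y i]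
      exact N.smul_mem _ hi
    exact ⟨this, by rwa [hcomm]⟩

lemma annIn_span_eq (m : Mul2 F E) (bs : Module.Basis ι F E) (hnat : NaturalBasis m bs)
    (S : Set ι) :
    annIn m (Submodule.span F (⇑bs '' S)) =
      Submodule.span F (⇑bs '' {j | j ∈ S → m (bs j) (bs j) = 0}) := by
  ext x
  have key : x ∈ annIn m (Submodule.span F (⇑bs '' S)) ↔
      ∀ j ∈ S, m x (bs j) = 0 := by
    constructor
    · intro hx j hj
      exact hx (bs j) (Submodule.subset_span ⟨j, hj, rfl⟩)
    · intro hx y hy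
      have : Submodule.span F (⇑bs '' S) ≤ LinearMap.ker (m x) := by
        rw [Submodule.span_le]
        rintro _ ⟨j, hj, rfl⟩
        exact hx j hj
      exact this hy
  rw [key, Module.Basis.mem_span_image]
  constructor
  · intro hx j hj
    rw [Finset.mem_coe, Finsupp.mem_support_iff] at hj
    intro hjS
    have := hx j hjS
    rw [mul_basis_eq m bs hnat, smul_eq_zero] at this
    exact this.resolve_left hj
  · intro hx j hj
    rw [mul_basis_eq m bs hnat]
    by_cases h0 : bs.repr x j = 0
    · simp [h0]
    · have : j ∈ ((bs.repr x).support : Set ι) := Finset.mem_coe.mpr (Finsupp.mem_support_iff.mpr h0)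
      simp [hx this hj]

lemma span_inf_span (bs : Module.Basis ι F E) (S T : Set ι) :
    Submodule.span F (⇑bs '' S) ⊓ Submodule.span F (⇑bs '' T) =
      Submodule.span F (⇑bs '' (S ∩ T)) := by
  ext x
  simp only [Submodule.mem_inf, Module.Basis.mem_span_image, Set.subset_inter_iff]

end Aux

/-- For `i ≥ 2`, `Uᵢ ⊕ U₁ = {x ∈ Annⁱ(E) : x·Annⁱ⁻¹(E) = 0}`, where
`Uⱼ` is spanned by the natural basis vectors `e` with `e² ∈ Annʲ⁻¹(E)`, `e ∉ Annʲ⁻¹(E)`. -/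
theorem stmt14 {F E : Type*} [Field F] [AddCommGroup E] [Module F E]
    [FiniteDimensional F E] (m : Mul2 F E) (hcomm : ∀ x y, m x y = m y x)
    (hnil : IsNilpotentAlg m)
    {ι : Type*} [Fintype ι] (bs : Module.Basis ι F E) (hnat : NaturalBasis m bs)
    (k : ℕ) (hk : 2 ≤ k) :
    Submodule.span F (⇑bs '' {i | m (bs i) (bs i) ∈ annSeries m (k - 1) ∧
        bs i ∉ annSeries m (k - 1)}) ⊔
      Submodule.span F (⇑bs '' {i | m (bs i) (bs i) ∈ annSeries m 0 ∧
        bs i ∉ annSeries m 0}) =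
    annSeries m k ⊓ annIn m (annSeries m (k - 1)) := by
  obtain ⟨n, rfl⟩ : ∃ n, k = n + 2 := ⟨k - 2, by omega⟩
  have h1 : (n + 2 - 1 : ℕ) = n + 1 := rfl
  rw [h1]
  have hzero : annSeries m 0 = (⊥ : Submodule F E) := rfl
  have hA1 : annSeries m (n + 1) =
      Submodule.span F (⇑bs '' {i | m (bs i) (bs i) ∈ annSeries m n}) :=
    annOver_eq m hcomm bs hnat (annSeries m n)
  have hA2 : annSeries m (n + 2) =
      Submodule.span F (⇑bs '' {i | m (bs i) (bs i) ∈ annSeries m (n + 1)}) :=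
    annOver_eq m hcomm bs hnat (annSeries m (n + 1))
  rw [hA2]
  conv_rhs => rw [hA1, annIn_span_eq m bs hnat, span_inf_span]
  rw [← Submodule.span_union, ← Set.image_union]
  have hset : ({i | m (bs i) (bs i) ∈ annSeries m (n + 1) ∧ bs i ∉ annSeries m (n + 1)} ∪
      {i | m (bs i) (bs i) ∈ annSeries m 0 ∧ bs i ∉ annSeries m 0} : Set ι) =
      {i | m (bs i) (bs i) ∈ annSeries m (n + 1)} ∩
      {j | j ∈ {i | m (bs i) (bs i) ∈ annSeries m n} → m (bs j) (bs j) = 0} := by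
    ext i
    have hmem : bs i ∈ annSeries m (n + 1) ↔ m (bs i) (bs i) ∈ annSeries m n := by
      rw [hA1]
      exact bs.self_mem_span_image
    simp only [Set.mem_union, Set.mem_setOf_eq, Set.mem_inter_iff, hzero,
      Submodule.mem_bot, hmem]
    have hne : bs i ≠ 0 := bs.ne_zero i
    have h0mem : (0 : E) ∈ annSeries m (n + 1) := Submodule.zero_mem _
    constructor
    · rintro (⟨h1, h2⟩ | ⟨h1, _⟩)
      · exact ⟨h1, fun h => absurd h h2⟩
      · exact ⟨h1 ▸ h0mem, fun _ => h1⟩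
    · rintro ⟨h1, h2⟩
      by_cases h3 : m (bs i) (bs i) ∈ annSeries m n
      · exact Or.inr ⟨h2 h3, hne⟩
      · exact Or.inl ⟨h1, h3⟩
  rw [hset, ← hA1]
end

section
/- Every nilpotent evolution algebra of type [2,1,1,1] over a field of characteristic not two is decomposable. -/
variable {F A : Type*} [Field F] [AddCommGroup A] [Module F A]

section AuxStmt16

variable {F A : Type*} [Field F] [AddCommGroup A] [Module F A]

lemma mem_annOver' {m : Mul2 F A} {N : Submodule F A} {x : A} :
    x ∈ annOver m N ↔ ∀ y : A, m x y ∈ N ∧ m y x ∈ N := Iff.rfl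

lemma mul_basis_right' {ι : Type*} [Fintype ι] (m : Mul2 F A) (bs : Module.Basis ι F A)
    (hnat : NaturalBasis m bs) (x : A) (i : ι) :
    m x (bs i) = bs.repr x i • m (bs i) (bs i) := by
  conv_lhs => rw [← bs.sum_repr x]
  rw [map_sum, LinearMap.sum_apply]
  rw [Finset.sum_eq_single i]
  · rw [map_smul]; rfl
  · intro j _ hj
    rw [map_smul, LinearMap.smul_apply, hnat j i hj, smul_zero]
  · intro h; exact absurd (Finset.mem_univ i) h

lemma mul_basis_left' {ι : Type*} [Fintype ι] (m : Mul2 F A) (bs : Module.Basis ι F A)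
    (hnat : NaturalBasis m bs) (x : A) (i : ι) :
    m (bs i) x = bs.repr x i • m (bs i) (bs i) := by
  conv_lhs => rw [← bs.sum_repr x]
  rw [map_sum]
  rw [Finset.sum_eq_single i]
  · rw [map_smul]
  · intro j _ hj
    rw [map_smul, hnat i j (fun h => hj h.symm), smul_zero]
  · intro h; exact absurd (Finset.mem_univ i) h

lemma annOver_eq_span' {ι : Type*} [Fintype ι] (m : Mul2 F A) (bs : Module.Basis ι F A)
    (hnat : NaturalBasis m bs) (N : Submodule F A) :
    annOver m N = Submodule.span F (bs '' {i | m (bs i) (bs i) ∈ N}) := by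
  apply le_antisymm
  · intro x hx
    rw [← bs.sum_repr x]
    apply Submodule.sum_mem
    intro i _
    by_cases hi : m (bs i) (bs i) ∈ N
    · exact Submodule.smul_mem _ _ (Submodule.subset_span ⟨i, hi, rfl⟩)
    · have h1 : m x (bs i) ∈ N := (hx (bs i)).1
      rw [mul_basis_right' m bs hnat x i] at h1
      by_cases hz : bs.repr x i = 0
      · rw [hz, zero_smul]; exact Submodule.zero_mem _
      · have h2 : m (bs i) (bs i) ∈ N := by
          have h3 := N.smul_mem (bs.repr x i)⁻¹ h1
          rwa [smul_smul, inv_mul_cancel₀ hz, one_smul] at h3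
        exact absurd h2 hi
  · rw [Submodule.span_le]
    rintro _ ⟨i, hi, rfl⟩
    intro y
    refine ⟨?_, ?_⟩
    · rw [mul_basis_left' m bs hnat y i]
      exact N.smul_mem _ hi
    · rw [mul_basis_right' m bs hnat y i]
      exact N.smul_mem _ hi

lemma annOver_mono' (m : Mul2 F A) {N N' : Submodule F A} (h : N ≤ N') :
    annOver m N ≤ annOver m N' :=
  fun _ hx y => ⟨h (hx y).1, h (hx y).2⟩

lemma annSeries_le_succ' (m : Mul2 F A) (k : ℕ) :
    annSeries m k ≤ annSeries m (k + 1) := by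
  induction k with
  | zero => exact bot_le
  | succ n ih => exact annOver_mono' m ih

lemma mem_sqA' (m : Mul2 F A) (x y : A) : m x y ∈ sqA m :=
  Submodule.subset_span ⟨x, trivial, y, trivial, rfl⟩

lemma sqA_le_span' {ι : Type*} [Fintype ι] (m : Mul2 F A) (bs : Module.Basis ι F A)
    (hnat : NaturalBasis m bs) :
    sqA m ≤ Submodule.span F (Set.range fun i => m (bs i) (bs i)) := by
  rw [sqA, mulSub, Submodule.span_le]
  rintro _ ⟨x, -, y, -, rfl⟩
  rw [← bs.sum_repr y, map_sum]
  apply Submodule.sum_mem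
  intro i _
  rw [map_smul, mul_basis_right' m bs hnat x i]
  exact Submodule.smul_mem _ _ (Submodule.smul_mem _ _ (Submodule.subset_span ⟨i, rfl⟩))

lemma smul_mem_cancel' {N : Submodule F A} {c : F} {x : A} (hc : c ≠ 0) (h : c • x ∈ N) :
    x ∈ N := by
  have h2 := N.smul_mem c⁻¹ h
  rwa [smul_smul, inv_mul_cancel₀ hc, one_smul] at h2

end AuxStmt16

/-- Every nilpotent evolution algebra of type `[2,1,1,1]` over a field of
characteristic ≠ 2 is decomposable. -/
theorem stmt16 {F E : Type*} [Field F] (hchar : (2 : F) ≠ 0)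
    [AddCommGroup E] [Module F E] [FiniteDimensional F E]
    (m : Mul2 F E) (hev : IsEvolutionAlg m)
    (hdim : Module.finrank F E = 5)
    (h1 : Module.finrank F (annSeries m 1) = 2)
    (h2 : Module.finrank F (annSeries m 2) = 3)
    (h3 : Module.finrank F (annSeries m 3) = 4)
    (h4 : annSeries m 4 = ⊤) :
    Decomposable m := by
  classical
  obtain ⟨hcomm, ι, hfin, bs, hnat⟩ := hev
  have hcard : Fintype.card ι = 5 := (Module.finrank_eq_card_basis bs).symm.trans hdim
  set sq : ι → E := fun i => m (bs i) (bs i) with hsq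
  set S : ℕ → Finset ι := fun k => Finset.univ.filter (fun i => sq i ∈ annSeries m k) with hS
  have hmemS : ∀ k i, i ∈ S k ↔ sq i ∈ annSeries m k := by
    intro k i; simp [hS]
  have hann : ∀ k, annSeries m (k + 1) = Submodule.span F (bs '' ↑(S k)) := by
    intro k
    have he : ({i | m (bs i) (bs i) ∈ annSeries m k} : Set ι) = ↑(S k) := by
      ext i; simp [hS, hsq]
    rw [show annSeries m (k + 1) = annOver m (annSeries m k) from rfl,
      annOver_eq_span' m bs hnat, he]
  have hspan_card : ∀ s : Finset ι,
      Module.finrank F (Submodule.span F (bs '' ↑s)) = s.card := by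
    intro s
    have hli : LinearIndependent F (fun i : (↑s : Set ι) => bs i) :=
      bs.linearIndependent.comp _ Subtype.val_injective
    rw [Set.image_eq_range, finrank_span_eq_card hli]
    simp
  have c0 : (S 0).card = 2 := by rw [← hspan_card (S 0), ← hann 0]; exact h1
  have c1 : (S 1).card = 3 := by rw [← hspan_card (S 1), ← hann 1]; exact h2
  have c2 : (S 2).card = 4 := by rw [← hspan_card (S 2), ← hann 2]; exact h3
  have hmono : ∀ k, S k ⊆ S (k + 1) := by
    intro k i hi
    exact (hmemS _ i).2 (annSeries_le_succ' m k ((hmemS _ i).1 hi))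
  -- pick the three distinguished indices
  have hne1 : (S 1 \ S 0).Nonempty := by
    rw [← Finset.card_pos, Finset.card_sdiff_of_subset (hmono 0), c0, c1]; norm_num
  obtain ⟨i3, hi3⟩ := hne1
  rw [Finset.mem_sdiff] at hi3
  have hne2 : (S 2 \ S 1).Nonempty := by
    rw [← Finset.card_pos, Finset.card_sdiff_of_subset (hmono 1), c1, c2]; norm_num
  obtain ⟨i4, hi4⟩ := hne2
  rw [Finset.mem_sdiff] at hi4
  have hne3 : (Finset.univ \ S 2).Nonempty := by
    rw [← Finset.card_pos, Finset.card_sdiff_of_subset (Finset.subset_univ _), Finset.card_univ, hcard, c2]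
    norm_num
  obtain ⟨i5, hi5⟩ := hne3
  rw [Finset.mem_sdiff] at hi5
  have hi5' : i5 ∉ S 2 := hi5.2
  -- the layers are "full": everything outside the distinguished indices collapses
  have hS2full : ∀ i : ι, i ≠ i5 → i ∈ S 2 := by
    have hsub : S 2 ⊆ Finset.univ.erase i5 := by
      intro i hi
      exact Finset.mem_erase.2 ⟨fun h => hi5' (h ▸ hi), Finset.mem_univ i⟩
    have hcle : (Finset.univ.erase i5).card ≤ (S 2).card := by
      rw [Finset.card_erase_of_mem (Finset.mem_univ i5), Finset.card_univ, hcard, c2]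
    have heq := Finset.eq_of_subset_of_card_le hsub hcle
    intro i hi
    rw [heq]
    exact Finset.mem_erase.2 ⟨hi, Finset.mem_univ i⟩
  have hS1full : ∀ i ∈ S 2, i ≠ i4 → i ∈ S 1 := by
    have hsub : S 1 ⊆ (S 2).erase i4 := by
      intro i hi
      exact Finset.mem_erase.2 ⟨fun h => hi4.2 (h ▸ hi), hmono 1 hi⟩
    have hcle : ((S 2).erase i4).card ≤ (S 1).card := by
      rw [Finset.card_erase_of_mem hi4.1, c1, c2]
    have heq := Finset.eq_of_subset_of_card_le hsub hcle
    intro i hi hi'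
    rw [heq]
    exact Finset.mem_erase.2 ⟨hi', hi⟩
  have hS0full : ∀ i ∈ S 1, i ≠ i3 → i ∈ S 0 := by
    have hsub : S 0 ⊆ (S 1).erase i3 := by
      intro i hi
      exact Finset.mem_erase.2 ⟨fun h => hi3.2 (h ▸ hi), hmono 0 hi⟩
    have hcle : ((S 1).erase i3).card ≤ (S 0).card := by
      rw [Finset.card_erase_of_mem hi3.1, c0, c1]
    have heq := Finset.eq_of_subset_of_card_le hsub hcle
    intro i hi hi'
    rw [heq]
    exact Finset.mem_erase.2 ⟨hi', hi⟩
  -- basic membership facts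
  have hbot : annSeries m 0 = ⊥ := rfl
  have hu : sq i3 ∈ annSeries m 1 := (hmemS 1 i3).1 hi3.1
  have hu0 : sq i3 ≠ 0 := by
    intro h
    exact hi3.2 ((hmemS 0 i3).2 (by rw [hbot, h]; exact Submodule.zero_mem _))
  have hv : sq i4 ∈ annSeries m 2 := (hmemS 2 i4).1 hi4.1
  have hv1 : sq i4 ∉ annSeries m 1 := fun h => hi4.2 ((hmemS 1 i4).2 h)
  have ht2 : sq i5 ∉ annSeries m 2 := fun h => hi5' ((hmemS 2 i5).2 h)
  have ne34 : i3 ≠ i4 := fun h => hi4.2 (h ▸ hi3.1)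
  have ne35 : i3 ≠ i5 := fun h => hi5' (h ▸ hmono 1 hi3.1)
  have ne45 : i4 ≠ i5 := fun h => hi5' (h ▸ hi4.1)
  -- the annihilator is not contained in the square of the algebra
  have hnotle : ¬ annSeries m 1 ≤ sqA m := by
    intro hcon
    have hQ : annSeries m 1 ≤ Submodule.span F (Set.range sq) :=
      le_trans hcon (sqA_le_span' m bs hnat)
    have key : annSeries m 1 ≤ Submodule.span F {sq i3} := by
      intro w hw
      obtain ⟨c, hc⟩ := (Submodule.mem_span_range_iff_exists_fun F).1 (hQ hw)
      have hzero : ∀ i : ι, i ≠ i3 → i ≠ i4 → i ≠ i5 → sq i = 0 := by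
        intro i h3 h4 h5
        have hmem0 := (hmemS 0 i).1 (hS0full i (hS1full i (hS2full i h5) h4) h3)
        rwa [hbot, Submodule.mem_bot] at hmem0
      have hw3 : w = c i3 • sq i3 + c i4 • sq i4 + c i5 • sq i5 := by
        rw [← hc]
        have hsub : ({i3, i4, i5} : Finset ι) ⊆ Finset.univ := Finset.subset_univ _
        rw [← Finset.sum_subset hsub (by
          intro i _ hi
          simp only [Finset.mem_insert, Finset.mem_singleton, not_or] at hi
          rw [hzero i hi.1 hi.2.1 hi.2.2, smul_zero])]
        rw [Finset.sum_insert (by simp [ne34, ne35]), Finset.sum_insert (by simp [ne45]),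
          Finset.sum_singleton, add_assoc]
      have hwAnn2 : w ∈ annSeries m 2 := annSeries_le_succ' m 1 hw
      have h5 : c i5 • sq i5 ∈ annSeries m 2 := by
        have he : c i5 • sq i5 = w - (c i3 • sq i3 + c i4 • sq i4) := by
          rw [hw3]; abel
        rw [he]
        exact Submodule.sub_mem _ hwAnn2 (Submodule.add_mem _
          (Submodule.smul_mem _ _ (annSeries_le_succ' m 1 hu)) (Submodule.smul_mem _ _ hv))
      have hc5 : c i5 = 0 := by
        by_contra hne
        exact ht2 (smul_mem_cancel' hne h5)
      have h4 : c i4 • sq i4 ∈ annSeries m 1 := by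
        have he : c i4 • sq i4 = w - c i3 • sq i3 := by
          rw [hw3, hc5, zero_smul, add_zero]; abel
        rw [he]
        exact Submodule.sub_mem _ hw (Submodule.smul_mem _ _ hu)
      have hc4 : c i4 = 0 := by
        by_contra hne
        exact hv1 (smul_mem_cancel' hne h4)
      rw [hw3, hc4, hc5, zero_smul, zero_smul, add_zero, add_zero]
      exact Submodule.smul_mem _ _ (Submodule.mem_span_singleton_self _)
    have hle := Submodule.finrank_mono key
    rw [h1, finrank_span_singleton hu0] at hle
    norm_num at hle
  obtain ⟨w, hwann, hwsq⟩ := SetLike.not_le_iff_exists.1 hnotle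
  have hw0 : w ≠ 0 := fun h => hwsq (h ▸ Submodule.zero_mem _)
  set π := (sqA m).mkQ with hπ
  have hπw : π w ≠ 0 := by
    rw [hπ, Submodule.mkQ_apply, ne_eq, Submodule.Quotient.mk_eq_zero]
    exact hwsq
  obtain ⟨Qc, hQc⟩ := Submodule.exists_isCompl (Submodule.span F {π w})
  have hann1 : ∀ x ∈ annSeries m 1, ∀ y : E, m x y = 0 ∧ m y x = 0 := by
    intro x hx y
    have hx' : x ∈ annOver m (⊥ : Submodule F E) := hx
    obtain ⟨ha, hb⟩ := hx' y
    exact ⟨(Submodule.mem_bot F).1 ha, (Submodule.mem_bot F).1 hb⟩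
  have hJmem : ∀ z : E, z ∈ sqA m → z ∈ Qc.comap π := by
    intro z hz
    rw [Submodule.mem_comap, hπ, Submodule.mkQ_apply,
      (Submodule.Quotient.mk_eq_zero _).2 hz]
    exact Submodule.zero_mem _
  refine ⟨Submodule.span F {w}, Qc.comap π, ?_, ?_, ?_, ?_, ?_, ?_⟩
  · -- span {w} is an ideal
    intro x hx y
    have hxann : x ∈ annSeries m 1 :=
      Submodule.span_le.2 (Set.singleton_subset_iff.2 hwann) hx
    obtain ⟨ha, hb⟩ := hann1 x hxann y
    rw [ha, hb]
    exact ⟨Submodule.zero_mem _, Submodule.zero_mem _⟩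
  · -- comap π Qc is an ideal: it contains the square of the algebra
    intro x _ y
    exact ⟨hJmem _ (mem_sqA' m x y), hJmem _ (mem_sqA' m y x)⟩
  · -- span {w} ≠ ⊥
    rw [ne_eq, Submodule.span_singleton_eq_bot]
    exact hw0
  · -- comap π Qc ≠ ⊥
    intro h
    have hmem : sq i3 ∈ Qc.comap π := hJmem _ (mem_sqA' m (bs i3) (bs i3))
    rw [h, Submodule.mem_bot] at hmem
    exact hu0 hmem
  · -- intersection is trivial
    apply (Submodule.eq_bot_iff _).2
    rintro x ⟨hx1, hx2⟩
    obtain ⟨c, rfl⟩ := Submodule.mem_span_singleton.1 hx1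
    have hq : c • π w ∈ Qc := by
      have := Submodule.mem_comap.1 hx2
      rwa [map_smul] at this
    have hsp : c • π w ∈ Submodule.span F {π w} :=
      Submodule.smul_mem _ _ (Submodule.mem_span_singleton_self _)
    have hz : c • π w = 0 := Submodule.disjoint_def.1 hQc.disjoint _ hsp hq
    rcases smul_eq_zero.1 hz with hc | hpw
    · rw [hc, zero_smul]
    · exact absurd hpw hπw
  · -- the sum is everything
    rw [eq_top_iff]
    intro x _
    have hx : π x ∈ Submodule.span F {π w} ⊔ Qc := by
      rw [hQc.sup_eq_top]; trivial
    obtain ⟨a, ha, b, hb, hab⟩ := Submodule.mem_sup.1 hx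
    obtain ⟨c, rfl⟩ := Submodule.mem_span_singleton.1 ha
    have hxc : x - c • w ∈ Qc.comap π := by
      have hπe : π (x - c • w) = b := by
        rw [map_sub, map_smul, ← hab]; abel
      rw [Submodule.mem_comap, hπe]
      exact hb
    have hdecomp : x = c • w + (x - c • w) := by abel
    rw [hdecomp]
    exact Submodule.add_mem _
      (Submodule.mem_sup_left (Submodule.smul_mem _ _ (Submodule.mem_span_singleton_self _)))
      (Submodule.mem_sup_right hxc)
end
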